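/- arXiv:1601.03342 — 7 statements merged into one kernel-verified Lean document; each statement's English description precedes it below -/
import Mathlib

section
/- Let m ≥ 1, let D ⊆ ℝ^m be a cone (a set closed under multiplication by positive scalars), and let L₀ : ℝ^m → ℝ be a linear functional such that 0 < Leb({x ∈ D : L₀(x) ≤ 1}) < ∞. Let P ⊆ D be a set of points equidistributed with respect to L₀ with constant c > 0, i.e. for every open cone U ⊆ ℝ^m one has #{p ∈ P : p ∈ U and L₀(p) ≤ T} / T^m → c · Leb({x ∈ D ∩ U : L₀(x) ≤ 1}) as T → ∞. Let R : ℝ^m → ℝ be a linear functional with R(x) > 0 for all x ∈ D \ {0}. Then for any sequences a_k → 0 with a_k > 0 and L_k → ∞, one has #{p ∈ P : L₀(p) ≤ L_k and R(p) ≤ a_k · L_k} / L_k^m → 0 as k → ∞. -/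
open MeasureTheory Filter Set

/-- Non-concentration estimate (countl2:2:2): points of a set `P` equidistributed in a cone `D`
with respect to a linear functional `L₀` do not accumulate near the zero set of a positive
linear functional `R`. -/
theorem stmt_1 (m : ℕ) (hm : 1 ≤ m) (D : Set (Fin m → ℝ))
    (hD : ∀ x ∈ D, ∀ t : ℝ, 0 < t → t • x ∈ D)
    (L₀ : (Fin m → ℝ) →ₗ[ℝ] ℝ)
    (hL₀pos : 0 < volume {x ∈ D | L₀ x ≤ 1})
    (hL₀fin : volume {x ∈ D | L₀ x ≤ 1} < ⊤)
    (P : Set (Fin m → ℝ)) (hP : P ⊆ D) (c : ℝ) (hc : 0 < c)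
    (hequi : ∀ U : Set (Fin m → ℝ), IsOpen U →
      (∀ x ∈ U, ∀ t : ℝ, 0 < t → t • x ∈ U) →
      Tendsto (fun T : ℝ => (Set.ncard {p ∈ P | p ∈ U ∧ L₀ p ≤ T} : ℝ) / T ^ m)
        atTop (nhds (c * (volume {x ∈ D ∩ U | L₀ x ≤ 1}).toReal)))
    (R : (Fin m → ℝ) →ₗ[ℝ] ℝ)
    (hRpos : ∀ x ∈ D, x ≠ 0 → 0 < R x)
    (a : ℕ → ℝ) (ha_pos : ∀ k, 0 < a k) (ha : Tendsto a atTop (nhds 0))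
    (Lk : ℕ → ℝ) (hLk : Tendsto Lk atTop atTop) :
    Tendsto (fun k : ℕ =>
        (Set.ncard {p ∈ P | L₀ p ≤ Lk k ∧ R p ≤ a k * Lk k} : ℝ) / (Lk k) ^ m)
      atTop (nhds 0) := by
  haveI : Nonempty (Fin m) := ⟨⟨0, hm⟩⟩
  have hm0 : m ≠ 0 := by omega
  set S : Set (Fin m → ℝ) := {x ∈ D | L₀ x ≤ 1} with hSdef
  have hSvol_pos : 0 < (volume S).toReal := ENNReal.toReal_pos hL₀pos.ne' hL₀fin.ne
  have hL₀cont : Continuous L₀ := L₀.continuous_of_finiteDimensional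
  have hRcont : Continuous R := R.continuous_of_finiteDimensional
  -- limit for U = univ
  have hNlim : Tendsto (fun T : ℝ => ((Set.ncard {p ∈ P | L₀ p ≤ T}) : ℝ) / T ^ m)
      atTop (nhds (c * (volume S).toReal)) := by
    have h := hequi univ isOpen_univ (by intro x _ t _; trivial)
    simpa using h
  -- finiteness of the counting sets
  have hfin : ∀ T : ℝ, ({p ∈ P | L₀ p ≤ T}).Finite := by
    by_contra hcon
    push_neg at hcon
    obtain ⟨T₁, hT₁⟩ := hcon
    have h0 : Tendsto (fun T : ℝ => ((Set.ncard {p ∈ P | L₀ p ≤ T}) : ℝ) / T ^ m)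
        atTop (nhds 0) := by
      apply Tendsto.congr' _ tendsto_const_nhds
      filter_upwards [eventually_ge_atTop T₁] with T hT
      have hinf : ({p ∈ P | L₀ p ≤ T}).Infinite :=
        Set.Infinite.mono (fun p hp => ⟨hp.1, hp.2.trans hT⟩) hT₁
      simp [hinf.ncard]
    have := tendsto_nhds_unique h0 hNlim
    nlinarith
  -- R is nonzero
  have hRnonneg : ∀ x ∈ D, 0 ≤ R x := by
    intro x hx
    rcases eq_or_ne x 0 with h | h
    · simp [h]
    · exact (hRpos x hx h).le
  have hR0 : R ≠ 0 := by
    intro h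
    have hsub : S ⊆ {0} := by
      intro x hx
      by_contra hx0
      have := hRpos x hx.1 hx0
      simp [h] at this
    have h0 : volume S = 0 := by
      refine measure_mono_null hsub ?_
      have : ({0} : Set (Fin m → ℝ)) = ((⊥ : Submodule ℝ (Fin m → ℝ)) : Set (Fin m → ℝ)) := by
        simp
      rw [this]
      exact Measure.addHaar_submodule _ _ bot_ne_top
    exact absurd h0 hL₀pos.ne'
  have hker : volume ((LinearMap.ker R : Submodule ℝ (Fin m → ℝ)) : Set (Fin m → ℝ)) = 0 :=
    Measure.addHaar_submodule _ _ (by rwa [Ne, LinearMap.ker_eq_top])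
  -- measurable envelope of S
  set S' : Set (Fin m → ℝ) :=
    (toMeasurable volume S ∩ {x | L₀ x ≤ 1}) ∩ {x | 0 ≤ R x} with hS'def
  have hSsub : S ⊆ S' := fun x hx =>
    ⟨⟨subset_toMeasurable _ _ hx, hx.2⟩, hRnonneg x hx.1⟩
  have hS'meas : MeasurableSet S' :=
    ((measurableSet_toMeasurable _ _).inter
      (measurableSet_le hL₀cont.measurable measurable_const)).inter
      (measurableSet_le measurable_const hRcont.measurable)
  have hS'fin : volume S' ≠ ⊤ := by
    have : volume S' ≤ volume (toMeasurable volume S) :=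
      measure_mono (fun x hx => hx.1.1)
    rw [measure_toMeasurable] at this
    exact (lt_of_le_of_lt this hL₀fin).ne
  -- shrinking sets
  set E : ℕ → Set (Fin m → ℝ) := fun n => S' ∩ {x | R x ≤ (1 / ((n : ℝ) + 1)) * L₀ x}
    with hEdef
  have hEanti : Antitone E := by
    intro n k hnk x hx
    obtain ⟨hx1, hx2⟩ := hx
    have hRx : 0 ≤ R x := hx1.2
    have hkpos : (0:ℝ) < (k : ℝ) + 1 := by positivity
    have hnpos : (0:ℝ) < (n : ℝ) + 1 := by positivity
    simp only [Set.mem_setOf_eq] at hx2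
    have hL0 : 0 ≤ L₀ x := by
      by_contra hneg
      push_neg at hneg
      have : (1 / ((k : ℝ) + 1)) * L₀ x < 0 := by
        apply mul_neg_of_pos_of_neg (by positivity) hneg
      linarith [hx2, hRx]
    refine ⟨hx1, ?_⟩
    have hle : (1 / ((k : ℝ) + 1)) * L₀ x ≤ (1 / ((n : ℝ) + 1)) * L₀ x := by
      apply mul_le_mul_of_nonneg_right _ hL0
      apply one_div_le_one_div_of_le hnpos
      have : (n:ℝ) ≤ (k:ℝ) := Nat.cast_le.2 hnk
      linarith
    exact le_trans hx2 hle
  have hEmeas : ∀ n, NullMeasurableSet (E n) volume := by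
    intro n
    exact (hS'meas.inter
      (measurableSet_le hRcont.measurable (measurable_const.mul hL₀cont.measurable))).nullMeasurableSet
  have hEfin : ∃ n, volume (E n) ≠ ⊤ := by
    exact ⟨0, fun h => hS'fin (top_le_iff.1 (h ▸ measure_mono (fun x hx => hx.1)))⟩
  have hEinter : (⋂ n, E n) ⊆ ((LinearMap.ker R : Submodule ℝ (Fin m → ℝ)) : Set (Fin m → ℝ)) := by
    intro x hx
    have hx0 := Set.mem_iInter.1 hx 0
    have hRx : 0 ≤ R x := hx0.1.2
    have hL1 : L₀ x ≤ 1 := hx0.1.1.2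
    have hle : ∀ n : ℕ, R x ≤ 1 / ((n : ℝ) + 1) := by
      intro n
      have hxn := Set.mem_iInter.1 hx n
      have := hxn.2
      have hpos : (0:ℝ) < 1 / ((n:ℝ)+1) := by positivity
      calc R x ≤ (1 / ((n : ℝ) + 1)) * L₀ x := this
        _ ≤ (1 / ((n : ℝ) + 1)) * 1 := by
            apply mul_le_mul_of_nonneg_left hL1 hpos.le
        _ = 1 / ((n : ℝ) + 1) := mul_one _
    have hRle0 : R x ≤ 0 := ge_of_tendsto' tendsto_one_div_add_atTop_nhds_zero_nat hle
    have : R x = 0 := le_antisymm hRle0 hRx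
    exact LinearMap.mem_ker.2 this
  have hEtend : Tendsto (fun n => volume (E n)) atTop (nhds 0) := by
    have h := tendsto_measure_iInter_atTop (μ := volume) hEmeas hEanti hEfin
    have h0 : volume (⋂ n, E n) = 0 :=
      measure_mono_null hEinter hker
    rw [h0] at h
    exact h
  -- main argument
  rw [NormedAddCommGroup.tendsto_nhds_zero]
  intro ε hε
  -- choose δ
  have hε3c : (0:ℝ) < ε / (3 * c) := by positivity
  have hofpos : (0 : ENNReal) < ENNReal.ofReal (ε / (3 * c)) := ENNReal.ofReal_pos.2 hε3c
  obtain ⟨n, hn⟩ := (hEtend.eventually_lt_const hofpos).exists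
  set δ : ℝ := 1 / ((n : ℝ) + 1) with hδdef
  have hδ : 0 < δ := by positivity
  set V : Set (Fin m → ℝ) := {x | δ * L₀ x < R x} with hVdef
  have hVopen : IsOpen V := isOpen_lt (continuous_const.mul hL₀cont) hRcont
  have hVcone : ∀ x ∈ V, ∀ t : ℝ, 0 < t → t • x ∈ V := by
    intro x hx t ht
    simp only [hVdef, Set.mem_setOf_eq, LinearMap.map_smul, smul_eq_mul] at hx ⊢
    nlinarith
  have hMlim : Tendsto (fun T : ℝ => ((Set.ncard {p ∈ P | p ∈ V ∧ L₀ p ≤ T}) : ℝ) / T ^ m)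
      atTop (nhds (c * (volume (S ∩ V)).toReal)) := by
    have h := hequi V hVopen hVcone
    have heq : {x ∈ D ∩ V | L₀ x ≤ 1} = S ∩ V := by
      ext x
      simp only [Set.mem_setOf_eq, Set.mem_inter_iff, hSdef]
      tauto
    rwa [heq] at h
  -- measure splitting
  have hSVfin : volume (S ∩ V) ≠ ⊤ :=
    (lt_of_le_of_lt (measure_mono Set.inter_subset_left) hL₀fin).ne
  have hSdVfin : volume (S \ V) ≠ ⊤ :=
    (lt_of_le_of_lt (measure_mono Set.diff_subset) hL₀fin).ne
  have hsplit : (volume S).toReal = (volume (S ∩ V)).toReal + (volume (S \ V)).toReal := by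
    rw [← ENNReal.toReal_add hSVfin hSdVfin, measure_inter_add_diff S hVopen.measurableSet]
  -- S \ V is small
  have hdiff_small : c * (volume (S \ V)).toReal < ε / 3 := by
    have hsub : S \ V ⊆ E n := by
      intro x hx
      refine ⟨hSsub hx.1, ?_⟩
      have := hx.2
      simp only [hVdef, Set.mem_setOf_eq, not_lt] at this
      exact this
    have hlt : volume (S \ V) < ENNReal.ofReal (ε / (3 * c)) :=
      lt_of_le_of_lt (measure_mono hsub) hn
    have htr : (volume (S \ V)).toReal < ε / (3 * c) :=
      (ENNReal.lt_ofReal_iff_toReal_lt hSdVfin).1 hlt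
    calc c * (volume (S \ V)).toReal < c * (ε / (3 * c)) := by
          exact mul_lt_mul_of_pos_left htr hc
      _ = ε / 3 := by field_simp
  -- second term tendsto
  have htend2 : Tendsto (fun k : ℕ =>
      ((Set.ncard {p ∈ P | L₀ p ≤ Lk k}) : ℝ) / (Lk k) ^ m
        - ((Set.ncard {p ∈ P | p ∈ V ∧ L₀ p ≤ Lk k}) : ℝ) / (Lk k) ^ m)
      atTop (nhds (c * (volume (S \ V)).toReal)) := by
    have h := (hNlim.comp hLk).sub (hMlim.comp hLk)
    have : c * (volume S).toReal - c * (volume (S ∩ V)).toReal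
        = c * (volume (S \ V)).toReal := by
      rw [hsplit]; ring
    rwa [this] at h
  have hE2 : ∀ᶠ k : ℕ in atTop,
      ((Set.ncard {p ∈ P | L₀ p ≤ Lk k}) : ℝ) / (Lk k) ^ m
        - ((Set.ncard {p ∈ P | p ∈ V ∧ L₀ p ≤ Lk k}) : ℝ) / (Lk k) ^ m < ε / 3 :=
    htend2.eventually_lt_const hdiff_small
  -- bound on N for large T
  set C : ℝ := c * (volume S).toReal with hCdef
  have hCpos : 0 < C := mul_pos hc hSvol_pos
  obtain ⟨T₀, hT₀⟩ := eventually_atTop.1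
    ((hNlim.eventually_lt_const (lt_add_one C)).and (eventually_ge_atTop 1))
  have hbound : ∀ T ≥ T₀, ((Set.ncard {p ∈ P | L₀ p ≤ T}) : ℝ) ≤ (C + 1) * T ^ m := by
    intro T hT
    obtain ⟨h1, h2⟩ := hT₀ T hT
    have hTpos : (0:ℝ) < T ^ m := pow_pos (lt_of_lt_of_le one_pos h2) m
    rw [div_lt_iff₀ hTpos] at h1
    linarith
  -- small terms
  have hE4 : ∀ᶠ k : ℕ in atTop, (C + 1) * ((a k) / δ) ^ m < ε / 3 := by
    have h : Tendsto (fun k => (C + 1) * ((a k) / δ) ^ m) atTop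
        (nhds ((C + 1) * ((0:ℝ) / δ) ^ m)) :=
      ((ha.div_const δ).pow m).const_mul _
    have h0 : (C + 1) * ((0:ℝ) / δ) ^ m = 0 := by
      simp [zero_pow hm0]
    rw [h0] at h
    exact h.eventually_lt_const (by positivity)
  have hpowtop : Tendsto (fun k => (Lk k) ^ m) atTop atTop :=
    (tendsto_pow_atTop hm0).comp hLk
  have hE5 : ∀ᶠ k : ℕ in atTop,
      ((Set.ncard {p ∈ P | L₀ p ≤ T₀}) : ℝ) / (Lk k) ^ m < ε / 3 :=
    (tendsto_const_nhds.div_atTop hpowtop).eventually_lt_const (by positivity)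
  have hEL : ∀ᶠ k : ℕ in atTop, 0 < Lk k := hLk.eventually_gt_atTop 0
  filter_upwards [hE2, hE4, hE5, hEL] with k h2 h4 h5 hL
  -- per-k argument
  have hLpow : (0:ℝ) < (Lk k) ^ m := pow_pos hL m
  set T : ℝ := a k * Lk k / δ with hTdef
  set Bad : Set (Fin m → ℝ) := {p ∈ P | L₀ p ≤ Lk k ∧ R p ≤ a k * Lk k} with hBaddef
  set A : Set (Fin m → ℝ) := {p ∈ P | L₀ p ≤ T} with hAdef
  set Btop : Set (Fin m → ℝ) := {p ∈ P | L₀ p ≤ Lk k} with hBtopdef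
  set Bsub : Set (Fin m → ℝ) := {p ∈ P | p ∈ V ∧ L₀ p ≤ Lk k} with hBsubdef
  have hBsubsub : Bsub ⊆ Btop := fun p hp => ⟨hp.1, hp.2.2⟩
  have hBtopfin : Btop.Finite := hfin (Lk k)
  have hAfin : A.Finite := hfin T
  have hsubset : Bad ⊆ A ∪ (Btop \ Bsub) := by
    intro p hp
    obtain ⟨hpP, hp1, hp2⟩ := hp
    by_cases hv : p ∈ V
    · left
      refine ⟨hpP, ?_⟩
      have : δ * L₀ p < R p := hv
      rw [le_div_iff₀ hδ]
      nlinarith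
    · right
      exact ⟨⟨hpP, hp1⟩, fun h => hv h.2.1⟩
  have hcount : (Bad.ncard : ℝ) ≤ (A.ncard : ℝ)
      + ((Btop.ncard : ℝ) - (Bsub.ncard : ℝ)) := by
    have h1 : Bad.ncard ≤ (A ∪ (Btop \ Bsub)).ncard :=
      Set.ncard_le_ncard hsubset (hAfin.union hBtopfin.diff)
    have h2 : (A ∪ (Btop \ Bsub)).ncard ≤ A.ncard + (Btop \ Bsub).ncard :=
      Set.ncard_union_le _ _
    have h3 : (Btop \ Bsub).ncard = Btop.ncard - Bsub.ncard :=
      Set.ncard_diff hBsubsub (hBtopfin.subset hBsubsub)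
    have h4 : Bsub.ncard ≤ Btop.ncard := Set.ncard_le_ncard hBsubsub hBtopfin
    have : (Bad.ncard : ℝ) ≤ (A.ncard : ℝ) + ((Btop.ncard - Bsub.ncard : ℕ) : ℝ) := by
      rw [← h3]
      exact_mod_cast le_trans h1 h2
    rwa [Nat.cast_sub h4] at this
  -- bound the A term
  have hAterm : (A.ncard : ℝ) / (Lk k) ^ m < ε / 3 := by
    rcases le_or_gt T₀ T with hcase | hcase
    · have hb := hbound T hcase
      have hTeq : T ^ m = ((a k) / δ) ^ m * (Lk k) ^ m := by
        rw [← mul_pow]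
        congr 1
        rw [hTdef]
        ring
      have : (A.ncard : ℝ) ≤ (C + 1) * ((a k) / δ) ^ m * (Lk k) ^ m := by
        calc (A.ncard : ℝ) ≤ (C + 1) * T ^ m := hb
          _ = (C + 1) * ((a k) / δ) ^ m * (Lk k) ^ m := by rw [hTeq]; ring
      calc (A.ncard : ℝ) / (Lk k) ^ m ≤ (C + 1) * ((a k) / δ) ^ m := by
            rw [div_le_iff₀ hLpow]; exact this
        _ < ε / 3 := h4
    · have hAsub : A ⊆ {p ∈ P | L₀ p ≤ T₀} :=
        fun p hp => ⟨hp.1, hp.2.trans hcase.le⟩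
      have hle : (A.ncard : ℝ) ≤ ((Set.ncard {p ∈ P | L₀ p ≤ T₀}) : ℝ) := by
        exact_mod_cast Set.ncard_le_ncard hAsub (hfin T₀)
      have hstep : (A.ncard : ℝ) / (Lk k) ^ m
          ≤ ((Set.ncard {p ∈ P | L₀ p ≤ T₀}) : ℝ) / (Lk k) ^ m :=
        (div_le_div_iff_of_pos_right hLpow).2 hle
      exact lt_of_le_of_lt hstep h5
  -- combine
  have hfinal : (Bad.ncard : ℝ) / (Lk k) ^ m < ε := by
    have hdiv : (Bad.ncard : ℝ) / (Lk k) ^ m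
        ≤ ((A.ncard : ℝ) + ((Btop.ncard : ℝ) - (Bsub.ncard : ℝ))) / (Lk k) ^ m :=
      (div_le_div_iff_of_pos_right hLpow).2 hcount
    rw [add_div, sub_div] at hdiv
    linarith
  rw [Real.norm_eq_abs, abs_of_nonneg (by positivity)]
  exact hfinal
end

section
/- There exist constants c₀ > 0 and C > 0 such that the following holds. Let ã, b̃, c, c̃ be positive real numbers satisfying cosh(c̃) = sinh(ã)·sinh(b̃)·cosh(c) + cosh(ã)·cosh(b̃). If max{ã, b̃} < 1/c₀ and c̃ > 4·max{−log(ã) − log(b̃) + c₀, c₀}, then |c̃ − c − log(sinh(ã)) − log(sinh(b̃))| ≤ C·e^{−c̃/10}. -/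
open Real

set_option maxHeartbeats 2000000 in
/-- Part (2) of Lemma (length:set): estimate for a right-angled hyperbolic hexagon with
intersecting sides `c` and `c̃`, in the regime where `ã, b̃` are small and `c̃` is large. -/
theorem stmt_3 :
    ∃ c₀ > (0 : ℝ), ∃ C > (0 : ℝ),
      ∀ ta tb c tc : ℝ, 0 < ta → 0 < tb → 0 < c → 0 < tc →
        Real.cosh tc = Real.sinh ta * Real.sinh tb * Real.cosh c
            + Real.cosh ta * Real.cosh tb →
        max ta tb < 1 / c₀ →
        tc > 4 * max (-Real.log ta - Real.log tb + c₀) c₀ →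
        |tc - c - Real.log (Real.sinh ta) - Real.log (Real.sinh tb)|
          ≤ C * Real.exp (-tc / 10) := by
  refine ⟨2, by norm_num, 48, by norm_num, ?_⟩
  intro ta tb c tc hta htb hc htc heq hmax htc4
  have hmax' : ta < 1/2 ∧ tb < 1/2 := by
    rw [max_lt_iff] at hmax; norm_num at hmax; exact hmax
  have hta2 : ta < 1/2 := hmax'.1
  have htb2 : tb < 1/2 := hmax'.2
  have htc8 : 8 < tc := by
    have := le_max_right (-Real.log ta - Real.log tb + 2) (2:ℝ)
    linarith
  -- exp (1/2) < 2
  have hexphalf : Real.exp (1/2) < 2 := by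
    nlinarith [Real.exp_one_lt_d9, Real.exp_pos (1/2:ℝ),
      (Real.exp_add (1/2) (1/2)).symm.trans (by norm_num : Real.exp ((1:ℝ)/2 + 1/2) = Real.exp 1)]
  -- sinh ta < 1, sinh tb < 1
  have hsa1 : Real.sinh ta < 1 := by
    have h1 : Real.sinh ta < Real.sinh (1/2) := Real.sinh_lt_sinh.2 hta2
    have : Real.sinh (1/2) < 1 := by
      rw [Real.sinh_eq]
      have := Real.exp_pos (-(1/2):ℝ)
      nlinarith
    linarith
  have hsb1 : Real.sinh tb < 1 := by
    have h1 : Real.sinh tb < Real.sinh (1/2) := Real.sinh_lt_sinh.2 htb2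
    have : Real.sinh (1/2) < 1 := by
      rw [Real.sinh_eq]
      have := Real.exp_pos (-(1/2):ℝ)
      nlinarith
    linarith
  obtain ⟨S, hSdef⟩ : ∃ S : ℝ, S = Real.sinh ta * Real.sinh tb := ⟨_, rfl⟩
  obtain ⟨K, hKdef⟩ : ∃ K : ℝ, K = Real.cosh ta * Real.cosh tb := ⟨_, rfl⟩
  rw [← hSdef, ← hKdef] at heq
  have hSa : 0 < Real.sinh ta := Real.sinh_pos_iff.2 hta
  have hSb : 0 < Real.sinh tb := Real.sinh_pos_iff.2 htb
  have hS : 0 < S := hSdef ▸ mul_pos hSa hSb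
  have hS1 : S < 1 := by rw [hSdef]; nlinarith
  have hca2 : Real.cosh ta < 2 := by
    have h1 : Real.cosh ta < Real.cosh (1/2) := by
      rw [Real.cosh_lt_cosh]; rw [abs_of_pos hta, abs_of_pos (by norm_num : (0:ℝ) < 1/2)]
      exact hta2
    have : Real.cosh (1/2) < 2 := by
      rw [Real.cosh_eq]
      have h2 : Real.exp (-(1/2):ℝ) < 1 := by
        rw [Real.exp_lt_one_iff]; norm_num
      nlinarith
    linarith
  have hcb2 : Real.cosh tb < 2 := by
    have h1 : Real.cosh tb < Real.cosh (1/2) := by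
      rw [Real.cosh_lt_cosh]; rw [abs_of_pos htb, abs_of_pos (by norm_num : (0:ℝ) < 1/2)]
      exact htb2
    have : Real.cosh (1/2) < 2 := by
      rw [Real.cosh_eq]
      have h2 : Real.exp (-(1/2):ℝ) < 1 := by
        rw [Real.exp_lt_one_iff]; norm_num
      nlinarith
    linarith
  have hK1 : 1 ≤ K := hKdef ▸ one_le_mul_of_one_le_of_one_le (Real.one_le_cosh ta) (Real.one_le_cosh tb)
  have hK4 : K < 4 := by rw [hKdef]; nlinarith [Real.one_le_cosh ta, Real.one_le_cosh tb]
  -- exp tc is large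
  have hE25 : (16:ℝ) < Real.exp tc := by
    have h1 : Real.exp 8 ≤ Real.exp tc := Real.exp_le_exp.2 (le_of_lt htc8)
    have h2 : (5:ℝ) ≤ Real.exp 4 := by linarith [Real.add_one_le_exp (4:ℝ)]
    have h3 : Real.exp (8:ℝ) = Real.exp 4 * Real.exp 4 := by
      rw [← Real.exp_add]; norm_num
    nlinarith
  have hEinv : Real.exp (-tc) < 1 := by
    rw [Real.exp_lt_one_iff]; linarith
  have hEmul : Real.exp (-tc) * Real.exp tc = 1 := by
    rw [← Real.exp_add]; simp
  -- the key identity in exponentials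
  have hid : Real.exp tc + Real.exp (-tc) = S * (Real.exp c + Real.exp (-c)) + 2 * K := by
    have h1 := heq
    rw [Real.cosh_eq, Real.cosh_eq] at h1
    linear_combination 2 * h1
  have hcoshc : S * Real.cosh c = Real.cosh tc - K := by linarith [heq]
  -- exp c ≥ cosh c
  have hec : Real.cosh c ≤ Real.exp c := by
    have h1 : Real.exp (-c) ≤ 1 := by
      rw [Real.exp_le_one_iff]; linarith
    have h2 : (1:ℝ) ≤ Real.exp c := by
      rw [Real.one_le_exp_iff]; linarith
    rw [Real.cosh_eq]; linarith
  have hcoshtc : Real.exp tc / 2 ≤ Real.cosh tc := by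
    rw [Real.cosh_eq]; linarith [Real.exp_pos (-tc)]
  -- lower bound : S * exp c ≥ exp tc / 4
  have hlow : Real.exp tc / 4 ≤ S * Real.exp c := by
    have h1 : Real.cosh tc - K ≤ S * Real.exp c := by
      rw [← hcoshc]; nlinarith
    nlinarith
  -- S * exp c ≤ exp tc
  have hr1 : S * Real.exp c ≤ Real.exp tc := by
    nlinarith [mul_pos hS (Real.exp_pos (-c))]
  -- exp(-c) ≤ 4 * exp(-tc)
  have hecl : Real.exp (-c) ≤ 4 * Real.exp (-tc) := by
    have h1 : Real.exp tc / 4 ≤ Real.exp c := by nlinarith [Real.exp_pos c]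
    rw [Real.exp_neg, Real.exp_neg]
    rw [inv_le_iff_one_le_mul₀ (Real.exp_pos c)]
    calc (1:ℝ) = 4 * (Real.exp tc)⁻¹ * (Real.exp tc / 4) := by
          field_simp
      _ ≤ 4 * (Real.exp tc)⁻¹ * Real.exp c :=
          mul_le_mul_of_nonneg_left h1 (by positivity)
  -- upper bound : exp tc ≤ S * exp c * (1 + 48 * exp (-tc))
  have hrup : Real.exp tc ≤ S * Real.exp c * (1 + 48 * Real.exp (-tc)) := by
    have h1 : Real.exp tc - S * Real.exp c = S * Real.exp (-c) + 2 * K - Real.exp (-tc) := by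
      linarith [hid]
    have h2 : S * Real.exp (-c) ≤ 4 * Real.exp (-tc) := by
      nlinarith [Real.exp_pos (-c), Real.exp_pos (-tc)]
    have h3 : 4 * Real.exp (-tc) ≤ 1 := by
      nlinarith [Real.exp_pos (-tc)]
    have h4 : (12:ℝ) ≤ 48 * Real.exp (-tc) * (S * Real.exp c) := by
      nlinarith [Real.exp_pos (-tc)]
    nlinarith
  -- rewrite the target as log of a ratio
  have hrewrite : tc - c - Real.log (Real.sinh ta) - Real.log (Real.sinh tb)
      = Real.log (Real.exp tc / (S * Real.exp c)) := by
    rw [Real.log_div (Real.exp_ne_zero tc) (ne_of_gt (mul_pos hS (Real.exp_pos c))),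
      Real.log_exp, Real.log_mul (ne_of_gt hS) (Real.exp_ne_zero c), Real.log_exp,
      hSdef, Real.log_mul (ne_of_gt hSa) (ne_of_gt hSb)]
    ring
  obtain ⟨r, hrdef⟩ : ∃ r : ℝ, r = Real.exp tc / (S * Real.exp c) := ⟨_, rfl⟩
  rw [hrewrite, ← hrdef]
  have hrpos : 0 < S * Real.exp c := mul_pos hS (Real.exp_pos c)
  have h1r : 1 ≤ r := by rw [hrdef]; exact (one_le_div hrpos).2 hr1
  have hub : r ≤ 1 + 48 * Real.exp (-tc) := by
    rw [hrdef, div_le_iff₀ hrpos]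
    linarith [hrup]
  have hlogub : Real.log r ≤ 48 * Real.exp (-tc) := by
    have := Real.log_le_sub_one_of_pos (lt_of_lt_of_le one_pos h1r)
    linarith
  have hlognn : 0 ≤ Real.log r := Real.log_nonneg h1r
  rw [abs_of_nonneg hlognn]
  have hfin : Real.exp (-tc) ≤ Real.exp (-tc / 10) := by
    apply Real.exp_le_exp.2; linarith
  linarith
end

section
/- There exist constants c₀ > 0 and C > 0 such that the following holds. Let ã, b̃, c, c̃ be positive real numbers satisfying cosh(c̃) = sinh(ã)·sinh(b̃)·cosh(c) − cosh(ã)·cosh(b̃) (the relation for a convex right-angled hyperbolic hexagon). If c > 2·(ã + b̃ + c₀) and min{ã, b̃} > c₀, then |c̃ − c − log(sinh(ã)) − log(sinh(b̃))| ≤ C·e^{−c̃/2}. -/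
open Real

set_option maxHeartbeats 1000000 in
/-- Part (3) of Lemma (length:set): estimate for a convex right-angled hyperbolic hexagon. -/
theorem stmt_4 :
    ∃ c₀ > (0 : ℝ), ∃ C > (0 : ℝ),
      ∀ ta tb c tc : ℝ, 0 < ta → 0 < tb → 0 < c → 0 < tc →
        Real.cosh tc = Real.sinh ta * Real.sinh tb * Real.cosh c
            - Real.cosh ta * Real.cosh tb →
        c > 2 * (ta + tb + c₀) →
        min ta tb > c₀ →
        |tc - c - Real.log (Real.sinh ta) - Real.log (Real.sinh tb)|
          ≤ C * Real.exp (-tc / 2) := by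
  refine ⟨2, by norm_num, 4, by norm_num, ?_⟩
  intro ta tb c tc hta htb hc htc hrel hcgt hmin
  have hta2 : (2:ℝ) < ta := lt_of_lt_of_le hmin (min_le_left ta tb)
  have htb2 : (2:ℝ) < tb := lt_of_lt_of_le hmin (min_le_right ta tb)
  set A := Real.sinh ta with hA
  set B := Real.sinh tb with hB
  -- sinh 2 ≥ 3
  have he1 : (2.7182818283:ℝ) < Real.exp 1 := Real.exp_one_gt_d9
  have he2 : Real.exp (2:ℝ) = Real.exp 1 * Real.exp 1 := by
    rw [← Real.exp_add]; norm_num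
  have hen2 : Real.exp (-2:ℝ) ≤ 1 := by
    rw [Real.exp_le_one_iff]; norm_num
  have hsinh2 : (3:ℝ) ≤ Real.sinh 2 := by
    rw [Real.sinh_eq]
    nlinarith only [he1, he2, hen2, Real.exp_pos (-2:ℝ)]
  have hA3 : (3:ℝ) ≤ A := le_trans hsinh2 (le_of_lt (Real.sinh_lt_sinh.mpr hta2))
  have hB3 : (3:ℝ) ≤ B := le_trans hsinh2 (le_of_lt (Real.sinh_lt_sinh.mpr htb2))
  have hA0 : (0:ℝ) < A := by linarith
  have hB0 : (0:ℝ) < B := by linarith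
  -- cosh ≤ sinh + 1
  have hcoshA : Real.cosh ta ≤ A + 1 := by
    have h1 := Real.cosh_sub_sinh ta
    have h2 : Real.exp (-ta) ≤ 1 := by rw [Real.exp_le_one_iff]; linarith
    linarith
  have hcoshB : Real.cosh tb ≤ B + 1 := by
    have h1 := Real.cosh_sub_sinh tb
    have h2 : Real.exp (-tb) ≤ 1 := by rw [Real.exp_le_one_iff]; linarith
    linarith
  have hcoshA0 : 0 < Real.cosh ta := Real.cosh_pos ta
  have hcoshB0 : 0 < Real.cosh tb := Real.cosh_pos tb
  have hP : Real.cosh ta * Real.cosh tb ≤ 2 * (A * B) := by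
    nlinarith only [hcoshA, hcoshB, hA3, hB3, hcoshA0, hcoshB0]
  have hc12 : (12:ℝ) < c := by linarith
  have hexpc13 : (13:ℝ) ≤ Real.exp c := by
    have := Real.add_one_le_exp c; linarith
  -- A*B ≤ exp(c/2-2)/4
  have hAexp : A ≤ Real.exp ta / 2 := by
    rw [hA, Real.sinh_eq]
    have := Real.exp_pos (-ta); linarith
  have hBexp : B ≤ Real.exp tb / 2 := by
    rw [hB, Real.sinh_eq]
    have := Real.exp_pos (-tb); linarith
  have hABexp : A * B ≤ Real.exp (c/2 - 2) / 4 := by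
    have h1 : Real.exp ta * Real.exp tb = Real.exp (ta + tb) := by rw [← Real.exp_add]
    have h2 : Real.exp (ta + tb) ≤ Real.exp (c/2 - 2) :=
      Real.exp_le_exp.mpr (by linarith)
    have p1 : A * B ≤ (Real.exp ta / 2) * (Real.exp tb / 2) :=
      mul_le_mul hAexp hBexp (by linarith) (by positivity)
    nlinarith only [p1, h1, h2]
  -- key expansion of the hexagon relation
  have hkey : Real.exp tc = A * B * Real.exp c + A * B * Real.exp (-c)
      - 2 * (Real.cosh ta * Real.cosh tb) - Real.exp (-tc) := by
    have h := hrel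
    rw [Real.cosh_eq tc, Real.cosh_eq c] at h
    linarith
  have hecn : Real.exp (-c) ≤ 1 := by rw [Real.exp_le_one_iff]; linarith
  have hetcn : Real.exp (-tc) ≤ 1 := by rw [Real.exp_le_one_iff]; linarith
  have hecn0 : (0:ℝ) < Real.exp (-c) := Real.exp_pos _
  have hetcn0 : (0:ℝ) < Real.exp (-tc) := Real.exp_pos _
  have hAB9 : (9:ℝ) ≤ A * B := by
    have := mul_le_mul hA3 hB3 (by norm_num) (by linarith : (0:ℝ) ≤ A)
    linarith
  have hsf0 : (0:ℝ) ≤ A * B * Real.exp (-c) := by positivity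
  have hsf1 : A * B * Real.exp (-c) ≤ A * B := by
    have := mul_le_mul_of_nonneg_left hecn (by linarith : (0:ℝ) ≤ A * B)
    nlinarith only [this]
  have hmul13 : 13 * (A * B) ≤ Real.exp c * (A * B) :=
    mul_le_mul_of_nonneg_right hexpc13 (by linarith)
  have hexptc : A * B * Real.exp c / 4 ≤ Real.exp tc := by
    nlinarith only [hkey, hP, hsf0, hetcn, hmul13, hAB9]
  -- w := exp(-tc/2)
  set w := Real.exp (-tc / 2) with hwdef
  have hw0 : 0 < w := Real.exp_pos _
  have hww : w * w = Real.exp (-tc) := by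
    rw [hwdef, ← Real.exp_add]; ring_nf
  have hinv : Real.exp (-tc) * Real.exp tc = 1 := by
    rw [← Real.exp_add]; simp
  -- w ≤ 1/4
  have hABec : (117:ℝ) ≤ A * B * Real.exp c := by
    have := mul_le_mul hAB9 hexpc13 (by norm_num) (by linarith : (0:ℝ) ≤ A * B)
    linarith
  have hexptc16 : (16:ℝ) ≤ Real.exp tc := by linarith
  have hetc16 : Real.exp (-tc) ≤ 1/16 := by
    nlinarith only [hinv, hexptc16, hetcn0]
  have hw14 : w ≤ 1/4 := by
    nlinarith only [hww, hetc16, hw0, sq_nonneg (w - 1/4)]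
  -- 196·AB ≤ exp c
  have he2' : (3:ℝ) ≤ Real.exp 2 := by
    have := Real.add_one_le_exp (2:ℝ); linarith
  have he8 : (81:ℝ) ≤ Real.exp (8:ℝ) := by
    have h : Real.exp (8:ℝ) = Real.exp 2 * Real.exp 2 * Real.exp 2 * Real.exp 2 := by
      rw [← Real.exp_add, ← Real.exp_add, ← Real.exp_add]; norm_num
    have h4 : (9:ℝ) ≤ Real.exp 2 * Real.exp 2 := by nlinarith only [he2']
    nlinarith only [h, h4]
  have hec2 : (81:ℝ) ≤ Real.exp (c/2 + 2) :=
    le_trans he8 (Real.exp_le_exp.mpr (by linarith))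
  have hprod : Real.exp (c/2 - 2) * Real.exp (c/2 + 2) = Real.exp c := by
    rw [← Real.exp_add]; ring_nf
  have h196 : 196 * (A * B) ≤ Real.exp c := by
    nlinarith only [hABexp, hec2, hprod, Real.exp_pos (c/2 - 2)]
  have hstep : 196 * (A*B) * (A*B) ≤ Real.exp c * (A*B) :=
    mul_le_mul_of_nonneg_right h196 (by linarith)
  have h49 : 49 * ((A * B) * (A * B)) ≤ Real.exp tc := by
    nlinarith only [hstep, hexptc]
  have hsq : (7*(A*B)*w) * (7*(A*B)*w) ≤ 1 := by
    have h1 : 49*((A*B)*(A*B)) * Real.exp (-tc) ≤ Real.exp tc * Real.exp (-tc) :=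
      mul_le_mul_of_nonneg_right h49 (le_of_lt hetcn0)
    calc (7*(A*B)*w) * (7*(A*B)*w) = 49*((A*B)*(A*B))*(w*w) := by ring
      _ = 49*((A*B)*(A*B))*Real.exp (-tc) := by rw [hww]
      _ ≤ Real.exp tc * Real.exp (-tc) := h1
      _ = 1 := by rw [mul_comm]; exact hinv
  have h7 : 7 * (A * B) * w ≤ 1 := by
    nlinarith only [hsq, sq_nonneg (7*(A*B)*w - 1), hA0, hB0, hw0]
  -- bound on E = exp c · A · B − exp tc
  have hEb : |Real.exp c * A * B - Real.exp tc| ≤ 7 * (A * B) := by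
    rw [abs_le]
    constructor
    · nlinarith only [hkey, hsf1, hsf0, hetcn0, hAB9, mul_pos hcoshA0 hcoshB0]
    · nlinarith only [hkey, hP, hsf0, hetcn, hAB9]
  -- u
  set u := Real.exp (c + Real.log A + Real.log B - tc) with hudef
  have hu0 : 0 < u := Real.exp_pos _
  have hlogu : Real.log u = c + Real.log A + Real.log B - tc := Real.log_exp _
  have huval : u = Real.exp c * A * B * Real.exp (-tc) := by
    rw [hudef, show c + Real.log A + Real.log B - tc
        = c + Real.log A + (Real.log B + (-tc)) by ring,
      Real.exp_add, Real.exp_add, Real.exp_add, Real.exp_log hA0, Real.exp_log hB0]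
    ring
  have hu1 : |u - 1| ≤ w := by
    have h2 : Real.exp tc * Real.exp (-tc) = 1 := by rw [← Real.exp_add]; simp
    have heq : u - 1 = (Real.exp c * A * B - Real.exp tc) * Real.exp (-tc) := by
      rw [huval]; linear_combination h2
    rw [heq, abs_mul, abs_of_pos hetcn0, ← hww]
    calc |Real.exp c * A * B - Real.exp tc| * (w * w)
        ≤ (7 * (A*B)) * (w * w) := by
          apply mul_le_mul_of_nonneg_right hEb (by positivity)
      _ = (7 * (A*B) * w) * w := by ring
      _ ≤ 1 * w := mul_le_mul_of_nonneg_right h7 (le_of_lt hw0)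
      _ = w := one_mul w
  have hub := abs_le.mp hu1
  have hu34 : (3:ℝ)/4 ≤ u := by linarith [hub.1]
  -- |log u| ≤ 2w
  have hloub : |Real.log u| ≤ 2 * w := by
    rw [abs_le]
    constructor
    · have h1 := Real.log_le_sub_one_of_pos (inv_pos.mpr hu0)
      rw [Real.log_inv] at h1
      have h4 : 1 - u ≤ w := by linarith [hub.1]
      have h5 : w ≤ 2*w*u := by nlinarith only [hw0, hu34]
      have h6 : 1 - u ≤ 2*w*u := le_trans h4 h5
      have h7' : u⁻¹ - 1 = (1 - u) * u⁻¹ := by field_simp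
      have h8 : u⁻¹ - 1 ≤ 2*w := by
        calc u⁻¹ - 1 = (1-u) * u⁻¹ := h7'
          _ ≤ (2*w*u) * u⁻¹ :=
              mul_le_mul_of_nonneg_right h6 (le_of_lt (inv_pos.mpr hu0))
          _ = 2*w*(u*u⁻¹) := by ring
          _ = 2*w := by rw [mul_inv_cancel₀ (ne_of_gt hu0), mul_one]
      linarith
    · have h1 := Real.log_le_sub_one_of_pos hu0
      linarith [hub.2]
  have hgoal : tc - c - Real.log A - Real.log B = -(Real.log u) := by
    rw [hlogu]; ring
  rw [hgoal, abs_neg]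
  linarith
end

section
/- Let 0 < ε < 1. Then there exists L₀ > 0 such that for all positive reals x, y, z with min{x, y, z} > L₀ and all (x', y', z') ∈ B_ε(x, y, z), one has |log(sinh(F₁(x, y, z))) − log(sinh(F₁(x', y', z')))| ≤ 5·ε·max{x, y, z}. -/
open Real

/-- Inverse hyperbolic cosine: `Arccosh w = log (w + √(w² − 1))` for `w ≥ 1`. -/
noncomputable def arccosh (w : ℝ) : ℝ := Real.log (w + Real.sqrt (w ^ 2 - 1))

/-- The function `F₁(x,y,z) = Arccosh((cosh z + cosh x · cosh y)/(sinh x · sinh y))`. -/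
noncomputable def F₁ (x y z : ℝ) : ℝ :=
  arccosh ((Real.cosh z + Real.cosh x * Real.cosh y) / (Real.sinh x * Real.sinh y))

/-- `(x',y',z') ∈ B_ε(x,y,z)`: each ratio is within a factor `1 + ε`. -/
def memB (ε x y z x' y' z' : ℝ) : Prop :=
  (1 / (1 + ε) < x / x' ∧ x / x' < 1 + ε) ∧
  (1 / (1 + ε) < y / y' ∧ y / y' < 1 + ε) ∧
  (1 / (1 + ε) < z / z' ∧ z / z' < 1 + ε)

lemma sinh_arccosh' (w : ℝ) (hw : 1 ≤ w) :
    Real.sinh (Real.log (w + Real.sqrt (w ^ 2 - 1))) = Real.sqrt (w ^ 2 - 1) := by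
  set s := Real.sqrt (w ^ 2 - 1) with hs
  have hs0 : 0 ≤ s := Real.sqrt_nonneg _
  have hs2 : s ^ 2 = w ^ 2 - 1 := Real.sq_sqrt (by nlinarith)
  have hpos : 0 < w + s := by nlinarith
  have hinv : (w + s)⁻¹ = w - s := by
    refine inv_eq_of_mul_eq_one_right ?_
    nlinarith
  rw [Real.sinh_eq, Real.exp_log hpos, Real.exp_neg, Real.exp_log hpos, hinv]
  ring

lemma logsinhF₁ (x y z : ℝ) (hx : 0 < x) (hy : 0 < y) (_hz : 0 < z) :
    Real.log (Real.sinh (F₁ x y z)) =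
      (Real.log (Real.cosh z + Real.cosh (x - y)) + Real.log (Real.cosh z + Real.cosh (x + y))) / 2
        - Real.log (Real.sinh x) - Real.log (Real.sinh y) := by
  have hsx : 0 < Real.sinh x := Real.sinh_pos_iff.2 hx
  have hsy : 0 < Real.sinh y := Real.sinh_pos_iff.2 hy
  have hA : 0 < Real.cosh z + Real.cosh (x - y) := by positivity
  have hB : 0 < Real.cosh z + Real.cosh (x + y) := by positivity
  set w := (Real.cosh z + Real.cosh x * Real.cosh y) / (Real.sinh x * Real.sinh y) with hw
  have hw1 : 1 ≤ w := by
    rw [hw, le_div_iff₀ (by positivity)]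
    have := Real.cosh_sub x y
    nlinarith [Real.cosh_pos (x := z), hA]
  have hkey : w ^ 2 - 1 =
      (Real.cosh z + Real.cosh (x - y)) * (Real.cosh z + Real.cosh (x + y)) /
        (Real.sinh x * Real.sinh y) ^ 2 := by
    rw [hw]
    field_simp
    rw [Real.cosh_sub, Real.cosh_add]
    ring
  have hF : Real.sinh (F₁ x y z) = Real.sqrt (w ^ 2 - 1) := sinh_arccosh' w hw1
  rw [hF, hkey, Real.sqrt_div (by positivity), Real.sqrt_mul hA.le,
    Real.sqrt_sq (by positivity : (0:ℝ) ≤ Real.sinh x * Real.sinh y),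
    Real.log_div (by positivity) (by positivity),
    Real.log_mul (by positivity) (by positivity),
    Real.log_sqrt hA.le, Real.log_sqrt hB.le,
    Real.log_mul hsx.ne' hsy.ne']
  ring

noncomputable def Gaux (x y z : ℝ) : ℝ :=
  max (max (z - x - y) ((z - x - y) / 2)) (-(min x y))

lemma abs3 (a b c : ℝ) : |a - b - c| ≤ |a| + |b| + |c| := by
  rw [abs_le]
  constructor
  · linarith [neg_abs_le a, le_abs_self b, le_abs_self c]
  · linarith [le_abs_self a, neg_abs_le b, neg_abs_le c]

lemma Gaux_lip (x y z x' y' z' : ℝ) :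
    |Gaux x y z - Gaux x' y' z'| ≤ |x - x'| + |y - y'| + |z - z'| := by
  have hx0 := abs_nonneg (x - x')
  have hy0 := abs_nonneg (y - y')
  have hz0 := abs_nonneg (z - z')
  have h1 : |(z - x - y) - (z' - x' - y')| ≤ |x - x'| + |y - y'| + |z - z'| := by
    have e : (z - x - y) - (z' - x' - y') = (z - z') - (x - x') - (y - y') := by ring
    rw [e]
    calc |(z - z') - (x - x') - (y - y')| ≤ |z - z'| + |x - x'| + |y - y'| := abs3 _ _ _
      _ ≤ _ := by linarith
  have h2 : |(z - x - y) / 2 - ((z' - x' - y') / 2)| ≤ |x - x'| + |y - y'| + |z - z'| := by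
    have e : (z - x - y) / 2 - (z' - x' - y') / 2 = ((z - x - y) - (z' - x' - y')) / 2 := by
      ring
    rw [e, abs_div, (by norm_num : |(2:ℝ)| = 2)]
    linarith [abs_nonneg ((z - x - y) - (z' - x' - y'))]
  have h3 : |(-(min x y)) - (-(min x' y'))| ≤ |x - x'| + |y - y'| + |z - z'| := by
    have e : (-(min x y)) - (-(min x' y')) = -(min x y - min x' y') := by ring
    rw [e, abs_neg]
    calc |min x y - min x' y'| ≤ max |x - x'| |y - y'| := abs_min_sub_min_le_max _ _ _ _
      _ ≤ _ := max_le (by linarith) (by linarith)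
  calc |Gaux x y z - Gaux x' y' z'|
      ≤ max |max (z - x - y) ((z - x - y) / 2) - max (z' - x' - y') ((z' - x' - y') / 2)|
          |(-(min x y)) - (-(min x' y'))| := abs_max_sub_max_le_max _ _ _ _
    _ ≤ _ := by
        apply max_le _ h3
        calc |max (z - x - y) ((z - x - y) / 2) - max (z' - x' - y') ((z' - x' - y') / 2)|
            ≤ max |(z - x - y) - (z' - x' - y')| |(z - x - y) / 2 - ((z' - x' - y') / 2)| :=
              abs_max_sub_max_le_max _ _ _ _
          _ ≤ _ := max_le h1 h2

lemma Geq (x y z : ℝ) (hx : 0 ≤ x) (hy : 0 ≤ y) :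
    (max z |x - y| + max z (x + y)) / 2 - x - y = Gaux x y z := by
  unfold Gaux
  rcases abs_cases (x - y) with ⟨he, h0⟩ | ⟨he, h0⟩ <;> rw [he] <;>
    simp only [max_def, min_def] <;> split_ifs <;> linarith

lemma sinh_log_bounds (t : ℝ) (ht : 1 ≤ t) :
    t - Real.log 4 ≤ Real.log (Real.sinh t) ∧ Real.log (Real.sinh t) ≤ t - Real.log 2 := by
  have ht0 : 0 < t := by linarith
  have hst : 0 < Real.sinh t := Real.sinh_pos_iff.2 ht0
  have hexp1 : Real.exp (-t) ≤ 1 / 2 := by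
    have h1 : Real.exp (-t) ≤ Real.exp (-1) := Real.exp_le_exp.2 (by linarith)
    have h2 : Real.exp (-1) ≤ 1 / 2 := by
      rw [Real.exp_neg]
      rw [inv_le_comm₀ (Real.exp_pos 1) (by norm_num)]
      linarith [Real.add_one_le_exp 1]
    linarith
  have hexpt : 1 ≤ Real.exp t := by
    rw [← Real.exp_zero]; exact Real.exp_le_exp.2 (by linarith)
  have hub : Real.sinh t ≤ Real.exp t / 2 := by
    rw [Real.sinh_eq]; linarith [Real.exp_pos (-t)]
  have hlb : Real.exp t / 4 ≤ Real.sinh t := by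
    rw [Real.sinh_eq]
    have : Real.exp (-t) ≤ Real.exp t / 2 := by linarith
    linarith
  constructor
  · calc t - Real.log 4 = Real.log (Real.exp t / 4) := by
          rw [Real.log_div (Real.exp_ne_zero t) (by norm_num), Real.log_exp]
      _ ≤ _ := Real.log_le_log (by positivity) hlb
  · calc Real.log (Real.sinh t) ≤ Real.log (Real.exp t / 2) := Real.log_le_log hst hub
      _ = t - Real.log 2 := by
          rw [Real.log_div (Real.exp_ne_zero t) (by norm_num), Real.log_exp]

lemma coshsum_bounds (z u : ℝ) (hz : 0 ≤ z) :
    max z |u| - Real.log 2 ≤ Real.log (Real.cosh z + Real.cosh u) ∧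
    Real.log (Real.cosh z + Real.cosh u) ≤ max z |u| + Real.log 2 := by
  set m := max z |u| with hm
  have hA : 0 < Real.cosh z + Real.cosh u := by positivity
  have hcu_ub : Real.cosh u ≤ Real.exp m := by
    rw [Real.cosh_eq]
    have h1 : Real.exp u ≤ Real.exp m :=
      Real.exp_le_exp.2 (le_trans (le_abs_self u) (le_max_right _ _))
    have h2 : Real.exp (-u) ≤ Real.exp m :=
      Real.exp_le_exp.2 (le_trans (neg_le_abs u) (le_max_right _ _))
    linarith
  have hcz_ub : Real.cosh z ≤ Real.exp m := by
    rw [Real.cosh_eq]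
    have h1 : Real.exp z ≤ Real.exp m := Real.exp_le_exp.2 (le_max_left _ _)
    have h2 : Real.exp (-z) ≤ Real.exp m := Real.exp_le_exp.2 (by linarith [le_max_left z |u|])
    linarith
  have hlb : Real.exp m / 2 ≤ Real.cosh z + Real.cosh u := by
    rw [hm]
    rcases max_cases z |u| with ⟨he, _⟩ | ⟨he, _⟩ <;> rw [he]
    · have : Real.exp z / 2 ≤ Real.cosh z := by rw [Real.cosh_eq]; linarith [Real.exp_pos (-z)]
      linarith [Real.cosh_pos (x := u)]
    · have h1 : Real.exp |u| / 2 ≤ Real.cosh u := by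
        rw [← Real.cosh_abs, Real.cosh_eq]; linarith [Real.exp_pos (-|u|)]
      linarith [Real.cosh_pos (x := z)]
  constructor
  · calc m - Real.log 2 = Real.log (Real.exp m / 2) := by
          rw [Real.log_div (Real.exp_ne_zero m) (by norm_num), Real.log_exp]
      _ ≤ _ := Real.log_le_log (by positivity) hlb
  · calc Real.log (Real.cosh z + Real.cosh u) ≤ Real.log (2 * Real.exp m) :=
          Real.log_le_log hA (by linarith)
      _ = m + Real.log 2 := by
          rw [Real.log_mul (by norm_num) (Real.exp_ne_zero m), Real.log_exp]; ring

lemma approxF₁ (x y z : ℝ) (hx : 1 ≤ x) (hy : 1 ≤ y) (hz : 1 ≤ z) :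
    |Real.log (Real.sinh (F₁ x y z)) - Gaux x y z| ≤ 4 := by
  rw [← Geq x y z (by linarith) (by linarith),
    logsinhF₁ x y z (by linarith) (by linarith) (by linarith)]
  obtain ⟨ha1, ha2⟩ := coshsum_bounds z (x - y) (by linarith)
  obtain ⟨hb1, hb2⟩ := coshsum_bounds z (x + y) (by linarith)
  have habs : |x + y| = x + y := abs_of_nonneg (by linarith)
  rw [habs] at hb1 hb2
  obtain ⟨hx1, hx2⟩ := sinh_log_bounds x hx
  obtain ⟨hy1, hy2⟩ := sinh_log_bounds y hy
  have h4 : Real.log 4 = 2 * Real.log 2 := by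
    rw [(by norm_num : (4:ℝ) = 2 ^ 2), Real.log_pow]
    push_cast; ring
  have hl2 : Real.log 2 < 0.6931471808 := Real.log_two_lt_d9
  have hl2p : 0 < Real.log 2 := Real.log_pos (by norm_num)
  rw [abs_le]
  rw [h4] at hx1 hy1
  constructor <;> linarith

/-- Lemma (basic:F1): Lipschitz-type control of `log ∘ sinh ∘ F₁` on comparability balls. -/
theorem stmt_5 (ε : ℝ) (hε0 : 0 < ε) (hε1 : ε < 1) :
    ∃ L₀ > (0 : ℝ), ∀ x y z x' y' z' : ℝ,
      0 < x → 0 < y → 0 < z → 0 < x' → 0 < y' → 0 < z' →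
      min (min x y) z > L₀ →
      memB ε x y z x' y' z' →
      |Real.log (Real.sinh (F₁ x y z)) - Real.log (Real.sinh (F₁ x' y' z'))|
        ≤ 5 * ε * max (max x y) z := by
  refine ⟨8 / ε, by positivity, ?_⟩
  intro x y z x' y' z' hx hy hz hx' hy' hz' hmin hB
  obtain ⟨⟨hbx1, hbx2⟩, ⟨hby1, hby2⟩, ⟨hbz1, hbz2⟩⟩ := hB
  have h1e : (0:ℝ) < 1 + ε := by linarith
  have h8 : (8:ℝ) < 8 / ε := by
    rw [lt_div_iff₀ hε0]; nlinarith
  have hxL : 8 / ε < x := lt_of_lt_of_le hmin (le_trans (min_le_left _ _) (min_le_left _ _))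
  have hyL : 8 / ε < y := lt_of_lt_of_le hmin (le_trans (min_le_left _ _) (min_le_right _ _))
  have hzL : 8 / ε < z := lt_of_lt_of_le hmin (min_le_right _ _)
  have key : ∀ a a' : ℝ, 0 < a → 0 < a' → 8 / ε < a →
      1 / (1 + ε) < a / a' → a / a' < 1 + ε → 1 ≤ a ∧ 1 ≤ a' ∧ |a - a'| ≤ ε * a := by
    intro a a' ha ha' haL h1 h2
    have hA : a < (1 + ε) * a' := by rw [div_lt_iff₀ ha'] at h2; linarith
    have hBb : a' < (1 + ε) * a := by
      rw [div_lt_div_iff₀ h1e ha'] at h1; linarith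
    have ha8 : 8 < a := lt_trans h8 haL
    have ha'4 : 4 < a' := by nlinarith
    refine ⟨by linarith, by linarith, ?_⟩
    rw [abs_le]
    constructor
    · nlinarith
    · rcases le_total a' a with h | h
      · nlinarith [mul_le_mul_of_nonneg_left h hε0.le]
      · nlinarith
  obtain ⟨hx1, hx'1, hax⟩ := key x x' hx hx' hxL hbx1 hbx2
  obtain ⟨hy1, hy'1, hay⟩ := key y y' hy hy' hyL hby1 hby2
  obtain ⟨hz1, hz'1, haz⟩ := key z z' hz hz' hzL hbz1 hbz2
  set M := max (max x y) z with hM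
  have hxM : x ≤ M := le_trans (le_max_left x y) (le_max_left _ _)
  have hyM : y ≤ M := le_trans (le_max_right x y) (le_max_left _ _)
  have hzM : z ≤ M := le_max_right _ _
  have hεM : 8 < ε * M := by
    have : 8 / ε < M := lt_of_lt_of_le hxL hxM
    calc (8:ℝ) = ε * (8 / ε) := by field_simp
      _ < ε * M := by exact mul_lt_mul_of_pos_left this hε0
  have hexM : ε * x ≤ ε * M := mul_le_mul_of_nonneg_left hxM hε0.le
  have heyM : ε * y ≤ ε * M := mul_le_mul_of_nonneg_left hyM hε0.le
  have hezM : ε * z ≤ ε * M := mul_le_mul_of_nonneg_left hzM hε0.le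
  have ha := approxF₁ x y z hx1 hy1 hz1
  have hb := approxF₁ x' y' z' hx'1 hy'1 hz'1
  have hg := Gaux_lip x y z x' y' z'
  have tri1 := abs_sub_le (Real.log (Real.sinh (F₁ x y z))) (Gaux x y z)
    (Real.log (Real.sinh (F₁ x' y' z')))
  have tri2 := abs_sub_le (Gaux x y z) (Gaux x' y' z') (Real.log (Real.sinh (F₁ x' y' z')))
  rw [abs_sub_comm (Gaux x' y' z') (Real.log (Real.sinh (F₁ x' y' z')))] at tri2
  calc |Real.log (Real.sinh (F₁ x y z)) - Real.log (Real.sinh (F₁ x' y' z'))| ≤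
      4 + (ε * M + ε * M + ε * M) + 4 := by linarith
    _ ≤ 5 * ε * M := by linarith
end

section
/- There exist constants c₀ > 0 and C > 0 such that for all positive reals x, y, z with min{x, y} > c₀ and x + y ≤ z, one has |F₁(x, y, z) − (z − x − y) − 2·log 2| ≤ C·(e^{−(z−x−y)} + e^{−2·min{x,y}}). -/
open Real

set_option maxHeartbeats 1600000 in
/-- Expansion (F1-1): on the region `x + y ≤ z`, `F₁` is asymptotically
`z − x − y + 2 log 2` with exponentially small error. -/
theorem stmt_8 :
    ∃ c₀ > (0 : ℝ), ∃ C > (0 : ℝ),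
      ∀ x y z : ℝ, 0 < x → 0 < y → 0 < z →
        min x y > c₀ → x + y ≤ z →
        |F₁ x y z - (z - x - y) - 2 * Real.log 2|
          ≤ C * (Real.exp (-(z - x - y)) + Real.exp (-2 * min x y)) := by
  refine ⟨2, by norm_num, 3, by norm_num, ?_⟩
  intro x y z hx hy hz hm hxyz
  unfold F₁ arccosh
  set m := min x y with hmdef
  have hmx : m ≤ x := min_le_left _ _
  have hmy : m ≤ y := min_le_right _ _
  have hm2 : (2:ℝ) < m := hm
  set A := Real.exp x with hAdef
  set B := Real.exp y with hBdef
  set Cz := Real.exp z with hCdef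
  set u := Real.exp (-x) with hudef
  set v := Real.exp (-y) with hvdef
  set wz := Real.exp (-z) with hwzdef
  set q := Real.exp (-2 * m) with hqdef
  set E := Real.exp (z - x - y) with hEdef
  have hA : 0 < A := Real.exp_pos _
  have hB : 0 < B := Real.exp_pos _
  have hC : 0 < Cz := Real.exp_pos _
  have hu : 0 < u := Real.exp_pos _
  have hv : 0 < v := Real.exp_pos _
  have hwz0 : 0 < wz := Real.exp_pos _
  have hq0 : 0 < q := Real.exp_pos _
  have hE0 : 0 < E := Real.exp_pos _
  have hAu : A * u = 1 := by rw [hAdef, hudef, ← Real.exp_add]; simp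
  have hBv : B * v = 1 := by rw [hBdef, hvdef, ← Real.exp_add]; simp
  have hCwz : Cz * wz = 1 := by rw [hCdef, hwzdef, ← Real.exp_add]; simp
  have hEeq : E = Cz * (u * v) := by
    rw [hEdef, hCdef, hudef, hvdef, ← Real.exp_add, ← Real.exp_add]; ring_nf
  have hu2 : u * u ≤ q := by
    rw [hudef, hqdef, ← Real.exp_add]; exact Real.exp_le_exp.2 (by linarith)
  have hv2 : v * v ≤ q := by
    rw [hvdef, hqdef, ← Real.exp_add]; exact Real.exp_le_exp.2 (by linarith)
  have hq1 : q ≤ 1 / 50 := by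
    have h4 : Real.exp 4 = (Real.exp 1) ^ 4 := by
      rw [← Real.exp_nat_mul]; norm_num
    have h27 : (2.7:ℝ) ≤ Real.exp 1 := by
      have := Real.exp_one_gt_d9; linarith
    have hsq : (7.29:ℝ) ≤ Real.exp 1 ^ 2 := by nlinarith [sq_nonneg (Real.exp 1 - 2.7)]
    have h50 : (50:ℝ) ≤ Real.exp 4 := by
      rw [h4]
      nlinarith [hsq, sq_nonneg (Real.exp 1 ^ 2 - 7.29)]
    have hle : q ≤ Real.exp (-4) := by
      rw [hqdef]; exact Real.exp_le_exp.2 (by linarith)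
    have h2 : Real.exp (-4) = (Real.exp 4)⁻¹ := Real.exp_neg 4
    rw [h2] at hle
    have hinv : Real.exp 4 * (Real.exp 4)⁻¹ = 1 :=
      mul_inv_cancel₀ (Real.exp_ne_zero 4)
    have hip : 0 < (Real.exp 4)⁻¹ := by positivity
    have h5 : (50:ℝ) * (Real.exp 4)⁻¹ ≤ Real.exp 4 * (Real.exp 4)⁻¹ :=
      mul_le_mul_of_nonneg_right h50 hip.le
    rw [hinv] at h5
    linarith
  have hCAB : A * B ≤ Cz := by
    rw [hAdef, hBdef, hCdef, ← Real.exp_add]; exact Real.exp_le_exp.2 hxyz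
  have hE1 : 1 ≤ E := Real.one_le_exp (by linarith)
  have hABE : A * B * E = Cz := by
    rw [hEeq, show A * B * (Cz * (u * v)) = Cz * ((A * u) * (B * v)) from by ring,
      hAu, hBv]; ring
  have hu1 : u ≤ 1 := by
    rw [hudef]
    calc Real.exp (-x) ≤ Real.exp 0 := Real.exp_le_exp.2 (by linarith)
      _ = 1 := Real.exp_zero
  have hA1 : 1 ≤ A := by rw [hAdef]; exact Real.one_le_exp hx.le
  have hB1 : 1 ≤ B := by rw [hBdef]; exact Real.one_le_exp hy.le
  -- numerator and denominator
  set N := Real.cosh z + Real.cosh x * Real.cosh y with hNdef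
  set D := Real.sinh x * Real.sinh y with hDdef
  have hN4 : 4 * N = 2 * Cz + 2 * wz + A * B + A * v + B * u + u * v := by
    rw [hNdef, Real.cosh_eq, Real.cosh_eq, Real.cosh_eq,
      hAdef, hBdef, hCdef, hudef, hvdef, hwzdef]; ring
  have hD4 : 4 * D = A * B - A * v - B * u + u * v := by
    rw [hDdef, Real.sinh_eq, Real.sinh_eq, hAdef, hBdef, hudef, hvdef]; ring
  clear_value A B Cz u v wz q E m N D
  have hABpos : (0:ℝ) < A * B := mul_pos hA hB
  have hAB1 : (1:ℝ) ≤ A * B := by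
    have h := mul_le_mul hA1 hB1 zero_le_one (by linarith : (0:ℝ) ≤ A)
    linarith [h]
  have hAv : A * v ≤ A * B * q := by
    have h1 : A * B * (v * v) = A * v := by
      rw [show A * B * (v * v) = (A * v) * (B * v) from by ring, hBv, mul_one]
    have h2 := mul_le_mul_of_nonneg_left hv2 hABpos.le
    linarith
  have hBu : B * u ≤ A * B * q := by
    have h1 : A * B * (u * u) = B * u := by
      rw [show A * B * (u * u) = (A * u) * (B * u) from by ring, hAu, one_mul]
    have h2 := mul_le_mul_of_nonneg_left hu2 hABpos.le
    linarith
  have hABuv : A * B * (u * v) = 1 := by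
    rw [show A * B * (u * v) = (A * u) * (B * v) from by ring, hAu, hBv]; ring
  have huv : u * v ≤ A * B * q := by
    have h1 : A * B * ((u * u) * (v * v)) = u * v := by
      rw [show A * B * ((u * u) * (v * v)) = ((A * u) * (B * v)) * (u * v) from by ring,
        hAu, hBv]; ring
    have hqq : (u * u) * (v * v) ≤ q * 1 := by
      have := mul_le_mul hu2 hv2 (by positivity) hq0.le
      have hqle1 : q ≤ 1 := by linarith
      have hq1' : q * q ≤ q * 1 := mul_le_mul_of_nonneg_left hqle1 hq0.le
      linarith
    have h2 := mul_le_mul_of_nonneg_left hqq hABpos.le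
    linarith
  have hwzuv : wz ≤ u * v := by
    have e1 : A * B * (wz * (u * v)) = wz := by
      rw [show A * B * (wz * (u * v)) = (A * B * (u * v)) * wz from by ring,
        hABuv, one_mul]
    have e2 : Cz * (wz * (u * v)) = u * v := by
      rw [show Cz * (wz * (u * v)) = (Cz * wz) * (u * v) from by ring,
        hCwz, one_mul]
    have h3 := mul_le_mul_of_nonneg_right hCAB
      (by positivity : (0:ℝ) ≤ wz * (u * v))
    linarith
  have hNle : 4 * N ≤ 2 * Cz + A * B + 5 * (A * B * q) := by
    linarith [hN4, hAv, hBu, huv, hwzuv]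
  have hNleF : 4 * N ≤ A * B * (2 * E + 1 + 5 * q) := by
    have : A * B * (2 * E + 1 + 5 * q)
        = 2 * (A * B * E) + A * B + 5 * (A * B * q) := by ring
    rw [this, hABE]; linarith
  have hNgeF : A * B * (2 * E + 1) ≤ 4 * N := by
    have : A * B * (2 * E + 1) = 2 * (A * B * E) + A * B := by ring
    rw [this, hABE]
    have p1 : 0 < A * v := mul_pos hA hv
    have p2 : 0 < B * u := mul_pos hB hu
    have p3 : 0 < u * v := mul_pos hu hv
    linarith
  have hDle : 4 * D ≤ A * B := by
    have h1 : u * v ≤ 1 * v := mul_le_mul_of_nonneg_right hu1 hv.le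
    have h2 : 1 * v ≤ A * v := mul_le_mul_of_nonneg_right hA1 hv.le
    have p2 : 0 < B * u := mul_pos hB hu
    linarith
  have hDgeF : A * B * (1 - 2 * q) ≤ 4 * D := by
    have p3 : 0 < u * v := mul_pos hu hv
    have hr : A * B * (1 - 2 * q) = A * B - 2 * (A * B * q) := by ring
    linarith [hAv, hBu, hr]
  have hABq : A * B * q ≤ A * B * (1 / 50) := mul_le_mul_of_nonneg_left hq1 hABpos.le
  have hDpos : 0 < D := by
    have hr : A * B * (1 - 2 * q) = A * B - 2 * (A * B * q) := by ring
    have hr2 : A * B * (1 / 50) = (1 / 50) * (A * B) := by ring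
    linarith [hDgeF, hABq, hAB1]
  have h12q : (0:ℝ) < 1 - 2 * q := by linarith
  -- bounds on W = N / D
  have hw_ge : 2 * E + 1 ≤ N / D := by
    rw [le_div_iff₀ hDpos]
    have h := mul_le_mul_of_nonneg_left hDle (by linarith : (0:ℝ) ≤ 2 * E + 1)
    linarith [h, hNgeF]
  have hw_le : N / D ≤ (2 * E + 1 + 5 * q) / (1 - 2 * q) := by
    rw [div_le_div_iff₀ hDpos h12q]
    have h1 := mul_le_mul_of_nonneg_right hNleF h12q.le
    have h2 := mul_le_mul_of_nonneg_left hDgeF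
      (by linarith : (0:ℝ) ≤ 2 * E + 1 + 5 * q)
    linarith [h1, h2]
  set W := N / D with hWdef
  have hW3 : 3 ≤ W := by linarith [hw_ge, hE1]
  have hWW : 9 ≤ W * W := by
    have h := mul_self_le_mul_self (by norm_num : (0:ℝ) ≤ 3) hW3
    linarith [h]
  set S := Real.sqrt (W ^ 2 - 1) with hSdef
  have hS_le : S ≤ W := by
    have h1 : W ^ 2 - 1 ≤ W ^ 2 := by linarith
    calc S ≤ Real.sqrt (W ^ 2) := Real.sqrt_le_sqrt h1
      _ = W := Real.sqrt_sq (by linarith)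
  have hS_ge : 2 * E ≤ S := by
    rw [hSdef, Real.le_sqrt (by linarith) (by linarith [hWW] : (0:ℝ) ≤ W ^ 2 - 1)]
    have h := mul_self_le_mul_self (by linarith : (0:ℝ) ≤ 2 * E + 1) hw_ge
    linarith [h, hE1]
  set L := W + S with hLdef
  have hL_ge : 4 * E ≤ L := by rw [hLdef]; linarith
  have hL_le : L ≤ 4 * E + 12 + 12 * E * q := by
    have hb : (2 * E + 1 + 5 * q) / (1 - 2 * q) ≤ 2 * E + 6 + 6 * E * q := by
      rw [div_le_iff₀ h12q]
      have hEq : 0 ≤ E * q := by positivity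
      have hEqq : E * q * q ≤ E * q * (1 / 50) :=
        mul_le_mul_of_nonneg_left hq1 hEq
      linarith [hEq, hEqq, hq0, hq1]
    rw [hLdef]; linarith [hS_le, hw_le, hb]
  have hLpos : 0 < L := by linarith
  have h4E : (0:ℝ) < 4 * E := by linarith
  -- log comparison
  have hlog4E : Real.log (4 * E) = (z - x - y) + 2 * Real.log 2 := by
    have h4 : Real.log 4 = 2 * Real.log 2 := by
      rw [show (4:ℝ) = 2 ^ 2 from by norm_num, Real.log_pow]; push_cast; ring
    rw [Real.log_mul (by norm_num) (ne_of_gt hE0), h4, hEdef, Real.log_exp]; ring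
  have hd0 : Real.log (4 * E) ≤ Real.log L := Real.log_le_log h4E hL_ge
  have hEinv : Real.exp (-(z - x - y)) = 1 / E := by
    rw [Real.exp_neg, ← hEdef, one_div]
  have hEE : E * (1 / E) = 1 := by field_simp
  have h1E : 0 < 1 / E := by positivity
  have hd_le : Real.log L ≤ Real.log (4 * E) + 3 * (1 / E + q) := by
    have hkey : L ≤ 4 * E * (1 + 3 * (1 / E + q)) := by
      have hr : 4 * E * (1 + 3 * (1 / E + q))
          = 4 * E + 12 * (E * (1 / E)) + 12 * E * q := by ring
      rw [hr, hEE]; linarith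
    have hexp : 4 * E * (1 + 3 * (1 / E + q)) ≤ 4 * E * Real.exp (3 * (1 / E + q)) := by
      have h := mul_le_mul_of_nonneg_left
        (Real.add_one_le_exp (3 * (1 / E + q))) (by positivity : (0:ℝ) ≤ 4 * E)
      linarith [h]
    calc Real.log L ≤ Real.log (4 * E * Real.exp (3 * (1 / E + q))) :=
          Real.log_le_log hLpos (le_trans hkey hexp)
      _ = Real.log (4 * E) + 3 * (1 / E + q) := by
          rw [Real.log_mul (ne_of_gt h4E) (Real.exp_ne_zero _), Real.log_exp]
  rw [hEinv, abs_le]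
  constructor
  · linarith [hd0, hlog4E, hq0, h1E]
  · linarith [hd_le, hlog4E]
end

section
/- The limit as z → 0⁺ of (log(Arccosh(1 + z)) − (log z)/2 − (log 2)/2)/z equals −1/12. -/
open Real Filter

lemma cosh_arccosh {w : ℝ} (hw : 1 ≤ w) : Real.cosh (arccosh w) = w := by
  set r := Real.sqrt (w ^ 2 - 1) with hr
  have hr0 : 0 ≤ r := Real.sqrt_nonneg _
  have hr2 : r ^ 2 = w ^ 2 - 1 := Real.sq_sqrt (by nlinarith)
  have hu : (0:ℝ) < w + r := by nlinarith
  rw [arccosh, Real.cosh_eq, Real.exp_log hu, Real.exp_neg, Real.exp_log hu]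
  field_simp
  nlinarith

lemma tendsto_sinh_div_self :
    Tendsto (fun s : ℝ => Real.sinh s / s) (nhdsWithin 0 (Set.Ioi 0)) (nhds 1) := by
  have h := (Real.hasDerivAt_sinh 0)
  rw [hasDerivAt_iff_tendsto_slope] at h
  have h2 : Tendsto (slope Real.sinh 0) (nhdsWithin 0 (Set.Ioi 0)) (nhds (Real.cosh 0)) :=
    h.mono_left (nhdsWithin_mono 0 (fun x hx => ne_of_gt hx))
  rw [Real.cosh_zero] at h2
  refine h2.congr (fun s => ?_)
  simp [slope_def_field, div_eq_div_iff]

lemma tendsto_sinh_cube :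
    Tendsto (fun s : ℝ => (Real.sinh s - s) / s ^ 3) (nhdsWithin 0 (Set.Ioi 0))
      (nhds (1 / 6)) := by
  apply HasDerivAt.lhopital_zero_nhdsGT
    (f' := fun s => Real.cosh s - 1) (g' := fun s => 3 * s ^ 2)
  · filter_upwards with x
    exact (Real.hasDerivAt_sinh x).sub (hasDerivAt_id x)
  · filter_upwards with x
    simpa using hasDerivAt_pow 3 x
  · filter_upwards [self_mem_nhdsWithin] with x (hx : 0 < x)
    positivity
  · have : Tendsto (fun s : ℝ => Real.sinh s - s) (nhds 0) (nhds 0) := by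
      have : Continuous (fun s : ℝ => Real.sinh s - s) := by fun_prop
      simpa using this.tendsto 0
    exact this.mono_left nhdsWithin_le_nhds
  · have : Tendsto (fun s : ℝ => s ^ 3) (nhds 0) (nhds 0) := by
      simpa using (continuous_pow 3).tendsto (0:ℝ)
    exact this.mono_left nhdsWithin_le_nhds
  · -- lim (cosh s - 1)/(3 s^2) = 1/6, second L'Hôpital
    apply HasDerivAt.lhopital_zero_nhdsGT
      (f' := fun s => Real.sinh s) (g' := fun s => 6 * s)
    · filter_upwards with x
      exact (Real.hasDerivAt_cosh x).sub_const 1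
    · filter_upwards with x
      have h1 := (hasDerivAt_pow 2 x).const_mul (3:ℝ)
      refine h1.congr_deriv ?_
      push_cast
      ring
    · filter_upwards [self_mem_nhdsWithin] with x (hx : 0 < x)
      positivity
    · have : Tendsto (fun s : ℝ => Real.cosh s - 1) (nhds 0) (nhds 0) := by
        have : Continuous (fun s : ℝ => Real.cosh s - 1) := by fun_prop
        simpa using this.tendsto 0
      exact this.mono_left nhdsWithin_le_nhds
    · have : Tendsto (fun s : ℝ => 3 * s ^ 2) (nhds 0) (nhds 0) := by
        have : Continuous (fun s : ℝ => 3 * s ^ 2) := by fun_prop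
        simpa using this.tendsto 0
      exact this.mono_left nhdsWithin_le_nhds
    · have h := tendsto_sinh_div_self.div_const 6
      have h16 : (1:ℝ) / 6 = 1 / 6 := rfl
      refine h.congr (fun s => ?_)
      rw [div_div, mul_comm]

lemma tendsto_log_slope :
    Tendsto (fun x : ℝ => Real.log x / (x - 1)) (nhdsWithin 1 {(1:ℝ)}ᶜ) (nhds 1) := by
  have h := Real.hasDerivAt_log (one_ne_zero)
  rw [hasDerivAt_iff_tendsto_slope] at h
  simp only [inv_one] at h
  refine h.congr (fun x => ?_)
  simp [slope_def_field, Real.log_one]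

lemma tendsto_G :
    Tendsto (fun s : ℝ => Real.log (Real.sinh s / s) / (2 * Real.sinh s ^ 2))
      (nhdsWithin 0 (Set.Ioi 0)) (nhds (1 / 12)) := by
  have hx1 : Tendsto (fun s : ℝ => Real.sinh s / s) (nhdsWithin 0 (Set.Ioi 0))
      (nhdsWithin 1 {(1:ℝ)}ᶜ) := by
    rw [tendsto_nhdsWithin_iff]
    refine ⟨tendsto_sinh_div_self, ?_⟩
    filter_upwards [self_mem_nhdsWithin] with s (hs : 0 < s)
    have h1 : s < Real.sinh s := Real.self_lt_sinh_iff.mpr hs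
    have : (1:ℝ) < Real.sinh s / s := (one_lt_div hs).mpr h1
    exact ne_of_gt this
  have hA : Tendsto (fun s : ℝ => Real.log (Real.sinh s / s) / (Real.sinh s / s - 1))
      (nhdsWithin 0 (Set.Ioi 0)) (nhds 1) := tendsto_log_slope.comp hx1
  have hC : Tendsto (fun s : ℝ => s ^ 2 / (2 * Real.sinh s ^ 2))
      (nhdsWithin 0 (Set.Ioi 0)) (nhds (1 / 2)) := by
    have h := ((tendsto_sinh_div_self.inv₀ one_ne_zero).pow 2).div_const 2
    simp only [inv_one, one_pow] at h
    refine h.congr' ?_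
    filter_upwards [self_mem_nhdsWithin] with s (hs : 0 < s)
    have hsinh : Real.sinh s ≠ 0 := ne_of_gt (Real.sinh_pos_iff.mpr hs)
    field_simp
  have hprod := (hA.mul tendsto_sinh_cube).mul hC
  have : (1:ℝ) * (1 / 6) * (1 / 2) = 1 / 12 := by norm_num
  rw [this] at hprod
  refine hprod.congr' ?_
  filter_upwards [self_mem_nhdsWithin] with s (hs : 0 < s)
  have hsne : s ≠ 0 := ne_of_gt hs
  have h1 : s < Real.sinh s := Real.self_lt_sinh_iff.mpr hs
  have hsinh : Real.sinh s ≠ 0 := ne_of_gt (Real.sinh_pos_iff.mpr hs)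
  have hd : Real.sinh s - s ≠ 0 := sub_ne_zero.mpr (ne_of_gt h1)
  have hx : Real.sinh s / s - 1 = (Real.sinh s - s) / s := by field_simp
  rw [hx]
  field_simp

lemma cosh_sub_one (t : ℝ) : Real.cosh t - 1 = 2 * Real.sinh (t / 2) ^ 2 := by
  have h := Real.cosh_sq (t / 2)
  have h2 : Real.cosh t = 2 * Real.cosh (t / 2) ^ 2 - 1 := by
    have := Real.cosh_two_mul (t / 2)
    rw [show 2 * (t / 2) = t by ring] at this
    linarith
  nlinarith [h, h2]

lemma tendsto_F :
    Tendsto (fun t : ℝ =>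
        (Real.log t - Real.log (Real.cosh t - 1) / 2 - Real.log 2 / 2) / (Real.cosh t - 1))
      (nhdsWithin 0 (Set.Ioi 0)) (nhds (-1 / 12)) := by
  have hhalf : Tendsto (fun t : ℝ => t / 2) (nhdsWithin 0 (Set.Ioi 0))
      (nhdsWithin 0 (Set.Ioi 0)) := by
    rw [tendsto_nhdsWithin_iff]
    constructor
    · have := (continuous_id.div_const (2:ℝ)).tendsto (0:ℝ)
      simpa using this.mono_left nhdsWithin_le_nhds
    · filter_upwards [self_mem_nhdsWithin] with t (ht : 0 < t)
      exact half_pos ht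
  have h := ((tendsto_G.comp hhalf).neg)
  rw [show -(1/12 : ℝ) = -1/12 by norm_num] at h
  refine h.congr' ?_
  filter_upwards [self_mem_nhdsWithin] with t (ht : 0 < t)
  have hs : 0 < t / 2 := half_pos ht
  have hsinh : 0 < Real.sinh (t / 2) := Real.sinh_pos_iff.mpr hs
  have hc : Real.cosh t - 1 = 2 * Real.sinh (t / 2) ^ 2 := cosh_sub_one t
  have hlog : Real.log (Real.cosh t - 1) = Real.log 2 + 2 * Real.log (Real.sinh (t / 2)) := by
    rw [hc, Real.log_mul two_ne_zero (by positivity), Real.log_pow]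
    push_cast; ring
  have hlog2 : Real.log (Real.sinh (t / 2) / (t / 2)) =
      Real.log (Real.sinh (t / 2)) - Real.log (t / 2) := Real.log_div (ne_of_gt hsinh) (ne_of_gt hs)
  have hlogt : Real.log (t / 2) = Real.log t - Real.log 2 :=
    Real.log_div (ne_of_gt ht) two_ne_zero
  simp only [Function.comp]
  rw [hlog2, hlogt, hlog, hc]
  ring

/-- The limit `(log(Arccosh(1+z)) − (log z)/2 − (log 2)/2)/z → −1/12` as `z → 0⁺`. -/
theorem stmt_16 :
    Tendsto
      (fun z : ℝ =>
        (Real.log (arccosh (1 + z)) - Real.log z / 2 - Real.log 2 / 2) / z)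
      (nhdsWithin 0 (Set.Ioi 0)) (nhds (-1 / 12)) := by
  have harc : Tendsto (fun z : ℝ => arccosh (1 + z)) (nhdsWithin 0 (Set.Ioi 0))
      (nhdsWithin 0 (Set.Ioi 0)) := by
    rw [tendsto_nhdsWithin_iff]
    constructor
    · have hinner : Tendsto (fun z : ℝ => (1 + z) + Real.sqrt ((1 + z) ^ 2 - 1))
          (nhds 0) (nhds 1) := by
        have hcont : ContinuousAt (fun z : ℝ => (1 + z) + Real.sqrt ((1 + z) ^ 2 - 1)) 0 := by
          fun_prop
        have h0 : ((1:ℝ) + 0) + Real.sqrt ((1 + (0:ℝ)) ^ 2 - 1) = 1 := by norm_num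
        simpa [h0] using hcont.tendsto
      have hlog : Tendsto Real.log (nhds 1) (nhds 0) := by
        simpa using (Real.continuousAt_log one_ne_zero).tendsto
      have := hlog.comp hinner
      simp only [arccosh]
      exact this.mono_left nhdsWithin_le_nhds
    · filter_upwards [self_mem_nhdsWithin] with z (hz : 0 < z)
      have h1 : (1:ℝ) < (1 + z) + Real.sqrt ((1 + z) ^ 2 - 1) := by
        have := Real.sqrt_nonneg ((1 + z) ^ 2 - 1)
        linarith
      exact Real.log_pos h1
  have h := tendsto_F.comp harc
  refine h.congr' ?_
  filter_upwards [self_mem_nhdsWithin] with z (hz : 0 < z)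
  have hw : (1:ℝ) ≤ 1 + z := by linarith
  have hc : Real.cosh (arccosh (1 + z)) = 1 + z := cosh_arccosh hw
  simp only [Function.comp, hc]
  ring_nf
end

section
/- For every ε > 0 there exists M ≥ 1 such that for all real x, y with x > 0 and y − x > M, one has |Arccosh(e^y − e^x) − y − log 2| < ε. (In particular, F(x,y) = Arccosh(e^y − e^x) is asymptotically linear on the cone {(x,y) : 0 < x < y}, approximated by the linear function y with R(x,y) = y − x.) -/
open Real

lemma log_one_sub_ge (t : ℝ) (ht : 0 ≤ t) (ht2 : t ≤ 1/2) : -(2*t) ≤ Real.log (1-t) := by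
  have h1 : (0:ℝ) < 1 - t := by linarith
  have h := Real.log_le_sub_one_of_pos (show (0:ℝ) < (1-t)⁻¹ by positivity)
  rw [Real.log_inv] at h
  have h3 : (1-t)⁻¹ - 1 ≤ 2 * t := by
    have he : (1-t)⁻¹ - 1 = t / (1-t) := by field_simp; ring
    rw [he, div_le_iff₀ h1]; nlinarith
  linarith

set_option maxHeartbeats 1000000 in
/-- `F(x,y) = Arccosh(e^y − e^x)` is asymptotically linear (≈ `y + log 2`) on the cone
`{0 < x < y}`, uniformly as `y − x → ∞`. -/
theorem stmt_17 :
    ∀ ε > (0 : ℝ), ∃ M : ℝ, 1 ≤ M ∧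
      ∀ x y : ℝ, 0 < x → y - x > M →
        |arccosh (Real.exp y - Real.exp x) - y - Real.log 2| < ε := by
  intro ε hε
  refine ⟨max 1 (Real.log (6/ε) + 1), le_max_left _ _, ?_⟩
  set M := max 1 (Real.log (6/ε) + 1) with hMdef
  intro x y hx hyx
  have hM1 : (1:ℝ) ≤ M := le_max_left _ _
  have hMlog : Real.log (6/ε) + 1 ≤ M := le_max_right _ _
  have hεM : Real.exp (-M) ≤ ε/6 := by
    rw [Real.exp_neg]
    have h6 : 6/ε ≤ Real.exp M :=
      le_trans (Real.exp_log (by positivity)).ge (Real.exp_le_exp.mpr (by linarith))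
    calc (Real.exp M)⁻¹ ≤ (6/ε)⁻¹ := inv_anti₀ (by positivity) h6
      _ = ε/6 := by rw [inv_div]
  have hexp1 : (2:ℝ) ≤ Real.exp 1 := by nlinarith [Real.add_one_le_exp 1]
  have hexpM2 : (2:ℝ) ≤ Real.exp M :=
    le_trans hexp1 (Real.exp_le_exp.mpr hM1)
  have hMhalf : Real.exp (-M) ≤ 1/2 := by
    have h1 : Real.exp (-M) ≤ Real.exp (-1) := Real.exp_le_exp.mpr (by linarith)
    have h2 : Real.exp (-1) ≤ 1/2 := by
      rw [Real.exp_neg]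
      calc (Real.exp 1)⁻¹ ≤ (2:ℝ)⁻¹ := inv_anti₀ (by norm_num) hexp1
        _ = 1/2 := by norm_num
    linarith
  set t := Real.exp (x - y) with htdef
  have htpos : 0 < t := Real.exp_pos _
  have htM : t < Real.exp (-M) := Real.exp_lt_exp.mpr (by linarith)
  have hthalf : t ≤ 1/2 := le_trans htM.le hMhalf
  set w := Real.exp y - Real.exp x with hwdef
  have hxe : Real.exp x = Real.exp y * t := by
    rw [htdef, ← Real.exp_add]; ring_nf
  have hw : w = Real.exp y * (1 - t) := by rw [hwdef, hxe]; ring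
  have hey : Real.exp M < Real.exp y := Real.exp_lt_exp.mpr (by linarith)
  have hwlb : Real.exp M / 2 ≤ w := by
    rw [hw]; nlinarith [Real.exp_pos y]
  have hw1 : (1:ℝ) ≤ w := by linarith
  have hwpos : (0:ℝ) < w := by linarith
  set c := 1/w with hcdef
  have hcpos : 0 < c := by positivity
  have hwc : w * c = 1 := by rw [hcdef]; field_simp
  have hc1 : c ≤ 1 := by nlinarith
  have hcM : c ≤ 2 * Real.exp (-M) := by
    have hInv : Real.exp (-M) * Real.exp M = 1 := by
      rw [← Real.exp_add]; simp
    nlinarith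
  have hcsq : c^2 ≤ ε/3 := by nlinarith
  set s := Real.sqrt (w^2 - 1) with hsdef
  have hs0 : 0 ≤ s := Real.sqrt_nonneg _
  have hs2 : s^2 = w^2 - 1 := Real.sq_sqrt (by nlinarith)
  have hs_ub : s ≤ w := by
    have h := Real.sqrt_le_sqrt (show w^2 - 1 ≤ w^2 by linarith)
    rwa [Real.sqrt_sq hwpos.le] at h
  have hs_lb : w - c ≤ s := Real.le_sqrt_of_sq_le (by nlinarith)
  have hlogw : Real.log w = y + Real.log (1 - t) := by
    rw [hw, Real.log_mul (Real.exp_ne_zero _) (by linarith), Real.log_exp]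
  have hA : arccosh w = Real.log (w + s) := rfl
  -- upper bound
  have hupper : arccosh w - y - Real.log 2 ≤ Real.log (1 - t) := by
    have h1 : Real.log (w + s) ≤ Real.log (2 * w) := by
      apply Real.log_le_log (by linarith) (by linarith)
    rw [Real.log_mul two_ne_zero (by linarith)] at h1
    rw [hA]; linarith [hlogw]
  have hlt0 : Real.log (1 - t) ≤ 0 := Real.log_nonpos (by linarith) (by linarith)
  -- lower bound
  have hc2half : c^2/2 ≤ 1/2 := by nlinarith
  have hpos2 : (0:ℝ) < 1 - c^2/2 := by nlinarith
  have heq : 2*w - c = 2*w*(1 - c^2/2) := by linear_combination c * hwc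
  have hlower : Real.log 2 + Real.log w + Real.log (1 - c^2/2) ≤ arccosh w := by
    have h1 : Real.log (2*w*(1 - c^2/2)) ≤ Real.log (w + s) := by
      apply Real.log_le_log (by nlinarith) (by linarith [heq, hs_lb])
    rw [Real.log_mul (by positivity) (by linarith), Real.log_mul two_ne_zero (by linarith)] at h1
    rw [hA]; linarith
  have hlog1 : -(2*t) ≤ Real.log (1 - t) := log_one_sub_ge t htpos.le hthalf
  have hlog2 : -(2*(c^2/2)) ≤ Real.log (1 - c^2/2) := log_one_sub_ge _ (by positivity) hc2half
  rw [abs_lt]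
  constructor
  · -- lower
    have : Real.log (1 - t) + Real.log (1 - c^2/2) ≤ arccosh w - y - Real.log 2 := by
      linarith [hlower, hlogw]
    linarith
  · linarith
end
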